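/- arXiv:math/0701197 — 5 statements merged into one kernel-verified Lean document; each statement's English description precedes it below -/
import Mathlib

section
/- The function g : ℓ¹(ℕ, ℂ) → ℂ defined by g(x) = Σ_{k=1}^∞ 2^k (x_k)^{2k} is well-defined (the series converges absolutely) for every x ∈ ℓ¹, and g is continuous. -/
/-- `g(x) = ∑_{k=1}^∞ 2^k x_k^{2k}` on `ℓ¹(ℕ, ℂ)` (index `k ∈ {1,2,...}`
realized as `k+1` for `k : ℕ`). -/
noncomputable def gFun (x : lp (fun _ : ℕ => ℂ) 1) : ℂ :=
  ∑' k : ℕ, (2 : ℂ) ^ (k + 1) * ((x : ℕ → ℂ) k) ^ (2 * (k + 1))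

lemma lp_one_summable_norm (x : lp (fun _ : ℕ => ℂ) 1) :
    Summable fun k : ℕ => ‖(x : ℕ → ℂ) k‖ := by
  have h := lp.hasSum_norm (p := 1) (by norm_num) x
  simpa using h.summable

/-- Summable majorant on the ball of radius `4⁻¹` around `x₀`. -/
lemma u_summable (x₀ : lp (fun _ : ℕ => ℂ) 1) :
    Summable fun k : ℕ =>
      (2 : ℝ) ^ (k + 1) * (‖(x₀ : ℕ → ℂ) k‖ + 4⁻¹) ^ (2 * (k + 1)) := by
  have h0 : Filter.Tendsto (fun k : ℕ => ‖(x₀ : ℕ → ℂ) k‖) Filter.atTop (nhds 0) :=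
    (lp_one_summable_norm x₀).tendsto_atTop_zero
  have hev : ∀ᶠ k : ℕ in Filter.atTop, ‖(x₀ : ℕ → ℂ) k‖ ≤ 4⁻¹ :=
    h0.eventually (ge_mem_nhds (by norm_num : (0:ℝ) < 4⁻¹))
  have hgeo : Summable fun k : ℕ => ((2 : ℝ)⁻¹) ^ (k + 1) :=
    (summable_geometric_of_lt_one (by norm_num) (by norm_num)).comp_injective
      (add_left_injective 1)
  apply Summable.of_norm_bounded_eventually_nat hgeo
  filter_upwards [hev] with k hk
  rw [Real.norm_of_nonneg (by positivity)]
  have hb : ‖(x₀ : ℕ → ℂ) k‖ + 4⁻¹ ≤ 2⁻¹ := by linarith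
  calc (2 : ℝ) ^ (k + 1) * (‖(x₀ : ℕ → ℂ) k‖ + 4⁻¹) ^ (2 * (k + 1))
      ≤ (2 : ℝ) ^ (k + 1) * (2⁻¹) ^ (2 * (k + 1)) := by
        gcongr
    _ = ((2 : ℝ)⁻¹) ^ (k + 1) := by
        rw [pow_mul, show ((2:ℝ)⁻¹) ^ 2 = 4⁻¹ by norm_num, ← mul_pow]
        norm_num

lemma term_bound (x₀ x : lp (fun _ : ℕ => ℂ) 1) (hx : ‖x - x₀‖ ≤ 4⁻¹) (k : ℕ) :
    ‖(2 : ℂ) ^ (k + 1) * ((x : ℕ → ℂ) k) ^ (2 * (k + 1))‖ ≤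
      (2 : ℝ) ^ (k + 1) * (‖(x₀ : ℕ → ℂ) k‖ + 4⁻¹) ^ (2 * (k + 1)) := by
  rw [norm_mul, norm_pow, norm_pow, Complex.norm_ofNat]
  have h1 : ‖(x : ℕ → ℂ) k - (x₀ : ℕ → ℂ) k‖ ≤ ‖x - x₀‖ := by
    simpa using lp.norm_apply_le_norm one_ne_zero (x - x₀) k
  have h2 : ‖(x : ℕ → ℂ) k‖ - ‖(x₀ : ℕ → ℂ) k‖ ≤ ‖(x : ℕ → ℂ) k - (x₀ : ℕ → ℂ) k‖ :=
    norm_sub_norm_le _ _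
  gcongr
  linarith

lemma coord_continuous (k : ℕ) :
    Continuous fun x : lp (fun _ : ℕ => ℂ) 1 => (x : ℕ → ℂ) k := by
  refine (LipschitzWith.of_dist_le_mul (K := 1) fun x y => ?_).continuous
  rw [NNReal.coe_one, one_mul, dist_eq_norm, dist_eq_norm]
  simpa using lp.norm_apply_le_norm one_ne_zero (x - y) k

theorem gFun_summable_and_continuous :
    (∀ x : lp (fun _ : ℕ => ℂ) 1,
      Summable fun k : ℕ => ‖(2 : ℂ) ^ (k + 1) * ((x : ℕ → ℂ) k) ^ (2 * (k + 1))‖) ∧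
    Continuous gFun := by
  constructor
  · intro x
    exact (u_summable x).of_nonneg_of_le (fun k => norm_nonneg _)
      (fun k => term_bound x x (by simp) k)
  · rw [continuous_iff_continuousAt]
    intro x₀
    have hto := tendstoUniformlyOn_tsum (u_summable x₀)
      (s := Metric.ball x₀ 4⁻¹)
      (f := fun k (x : lp (fun _ : ℕ => ℂ) 1) =>
        (2 : ℂ) ^ (k + 1) * ((x : ℕ → ℂ) k) ^ (2 * (k + 1)))
      (fun k x hx => term_bound x₀ x
        (le_of_lt (by simpa [dist_eq_norm] using hx)) k)
    have hcont : ContinuousOn gFun (Metric.ball x₀ 4⁻¹) := by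
      refine hto.continuousOn (Filter.Eventually.of_forall fun t => ?_).frequently
      exact (continuous_finset_sum t fun k _ =>
        continuous_const.mul ((coord_continuous k).pow _)).continuousOn
    exact hcont.continuousAt (Metric.ball_mem_nhds _ (by norm_num))
end

section
/- The function g : ℓ¹(ℕ, ℂ) → ℂ, g(x) = Σ_{k=1}^∞ 2^k (x_k)^{2k}, is unbounded on the closed ball of radius 2 around every point x ∈ ℓ¹: for every x ∈ ℓ¹ and every N > 0 there exists y ∈ ℓ¹ with ‖y − x‖₁ ≤ 2 and |g(y)| ≥ N. -/
lemma lp_norm_summable (y : lp (fun _ : ℕ => ℂ) 1) :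
    Summable (fun k : ℕ => ‖(y : ℕ → ℂ) k‖) := by
  have := (lp.memℓp y).summable (p := 1) (by norm_num)
  simpa using this

lemma gTerm_norm_summable (y : lp (fun _ : ℕ => ℂ) 1) :
    Summable (fun k : ℕ => ‖(2 : ℂ) ^ (k + 1) * ((y : ℕ → ℂ) k) ^ (2 * (k + 1))‖) := by
  have h0 : Filter.Tendsto (fun k : ℕ => ‖(y : ℕ → ℂ) k‖) Filter.atTop (nhds 0) :=
    (lp_norm_summable y).tendsto_atTop_zero
  have hev : ∀ᶠ k in Filter.atTop, ‖(y : ℕ → ℂ) k‖ ≤ 1 / 2 :=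
    h0.eventually_le_const (by norm_num)
  have hgeo : Summable (fun k : ℕ => ((1 : ℝ) / 2) ^ (k + 1)) :=
    (summable_geometric_of_lt_one (by norm_num) (by norm_num)).comp_injective
      (add_left_injective 1)
  apply Summable.of_norm_bounded_eventually_nat hgeo
  filter_upwards [hev] with k hk
  have h1 : ‖(2 : ℂ) ^ (k + 1) * ((y : ℕ → ℂ) k) ^ (2 * (k + 1))‖
      = 2 ^ (k + 1) * ‖(y : ℕ → ℂ) k‖ ^ (2 * (k + 1)) := by
    simp [norm_mul, norm_pow]
  rw [Real.norm_eq_abs, abs_of_nonneg (norm_nonneg _), h1]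
  have h2 : ‖(y : ℕ → ℂ) k‖ ^ (2 * (k + 1)) ≤ ((1 : ℝ) / 2) ^ (2 * (k + 1)) :=
    pow_le_pow_left₀ (norm_nonneg _) hk _
  calc 2 ^ (k + 1) * ‖(y : ℕ → ℂ) k‖ ^ (2 * (k + 1))
      ≤ 2 ^ (k + 1) * ((1 : ℝ) / 2) ^ (2 * (k + 1)) := by
        exact mul_le_mul_of_nonneg_left h2 (by positivity)
    _ = ((1 : ℝ) / 2) ^ (k + 1) := by
        rw [two_mul, pow_add, div_pow, div_pow, one_pow, one_pow]
        field_simp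
        ring

theorem gFun_unbounded_on_balls (x : lp (fun _ : ℕ => ℂ) 1) (N : ℝ) (hN : 0 < N) :
    ∃ y : lp (fun _ : ℕ => ℂ) 1, ‖y - x‖ ≤ 2 ∧ N ≤ ‖gFun y‖ := by
  classical
  set C : ℝ := ∑' k : ℕ, ‖(2 : ℂ) ^ (k + 1) * ((x : ℕ → ℂ) k) ^ (2 * (k + 1))‖ with hC
  have hCsum := gTerm_norm_summable x
  -- choose n large
  have h0 : Filter.Tendsto (fun k : ℕ => ‖(x : ℕ → ℂ) k‖) Filter.atTop (nhds 0) :=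
    (lp_norm_summable x).tendsto_atTop_zero
  have hev1 : ∀ᶠ k in Filter.atTop, ‖(x : ℕ → ℂ) k‖ ≤ 1 :=
    h0.eventually_le_const (by norm_num)
  have hev2 : ∀ᶠ k : ℕ in Filter.atTop, N + C ≤ 2 ^ (k + 1) := by
    have : Filter.Tendsto (fun k : ℕ => (2 : ℝ) ^ (k + 1)) Filter.atTop Filter.atTop :=
      (tendsto_pow_atTop_atTop_of_one_lt (by norm_num)).comp (Filter.tendsto_add_atTop_nat 1)
    exact this.eventually_ge_atTop _
  obtain ⟨n, hn1, hn2⟩ := (hev1.and hev2).exists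
  refine ⟨x + lp.single 1 n (1 - (x : ℕ → ℂ) n), ?_, ?_⟩
  · have : x + lp.single 1 n (1 - (x : ℕ → ℂ) n) - x = lp.single 1 n (1 - (x : ℕ → ℂ) n) := by
      abel
    rw [this]
    have := lp.norm_single (E := fun _ : ℕ => ℂ) (p := 1) (by norm_num)
      n ((1 : ℂ) - (x : ℕ → ℂ) n)
    rw [this]
    calc ‖(1 : ℂ) - (x : ℕ → ℂ) n‖ ≤ ‖(1 : ℂ)‖ + ‖(x : ℕ → ℂ) n‖ := norm_sub_le _ _
      _ ≤ 1 + 1 := by rw [norm_one]; linarith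
      _ = 2 := by norm_num
  · set y := x + lp.single 1 n (1 - (x : ℕ → ℂ) n) with hy
    have hyk : ∀ k : ℕ, k ≠ n → (y : ℕ → ℂ) k = (x : ℕ → ℂ) k := by
      intro k hk
      simp [hy, lp.coeFn_add, lp.single_apply, Pi.single_apply, hk]
    have hyn : (y : ℕ → ℂ) n = 1 := by
      simp [hy, lp.coeFn_add, lp.single_apply, Pi.single_apply]
    have hsum : Summable (fun k : ℕ => (2 : ℂ) ^ (k + 1) * ((y : ℕ → ℂ) k) ^ (2 * (k + 1))) :=
      (gTerm_norm_summable y).of_norm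
    have hsplit := Summable.tsum_eq_add_tsum_ite hsum n
    have hterm : (2 : ℂ) ^ (n + 1) * ((y : ℕ → ℂ) n) ^ (2 * (n + 1)) = (2 : ℂ) ^ (n + 1) := by
      rw [hyn]; simp
    -- bound the remaining sum
    have hrest : ‖∑' k : ℕ, (if k = n then 0 else
        (2 : ℂ) ^ (k + 1) * ((y : ℕ → ℂ) k) ^ (2 * (k + 1)))‖ ≤ C := by
      have hble : ∀ k : ℕ, ‖(if k = n then (0 : ℂ) else
          (2 : ℂ) ^ (k + 1) * ((y : ℕ → ℂ) k) ^ (2 * (k + 1)))‖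
          ≤ ‖(2 : ℂ) ^ (k + 1) * ((x : ℕ → ℂ) k) ^ (2 * (k + 1))‖ := by
        intro k
        by_cases hk : k = n
        · simp [hk]
        · rw [if_neg hk, hyk k hk]
      calc ‖∑' k : ℕ, (if k = n then (0 : ℂ) else
            (2 : ℂ) ^ (k + 1) * ((y : ℕ → ℂ) k) ^ (2 * (k + 1)))‖
          ≤ ∑' k : ℕ, ‖(2 : ℂ) ^ (k + 1) * ((x : ℕ → ℂ) k) ^ (2 * (k + 1))‖ :=
            tsum_of_norm_bounded hCsum.hasSum hble
        _ = C := rfl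
    have hgy : gFun y = (2 : ℂ) ^ (n + 1) + ∑' k : ℕ, (if k = n then 0 else
        (2 : ℂ) ^ (k + 1) * ((y : ℕ → ℂ) k) ^ (2 * (k + 1))) := by
      rw [gFun, hsplit, hterm]
    have hnorm2 : ‖(2 : ℂ) ^ (n + 1)‖ = (2 : ℝ) ^ (n + 1) := by
      rw [norm_pow]; norm_num
    have hCnn : 0 ≤ C := tsum_nonneg fun k => norm_nonneg _
    calc N ≤ 2 ^ (n + 1) - C := by linarith
      _ ≤ ‖(2 : ℂ) ^ (n + 1)‖ - ‖∑' k : ℕ, (if k = n then 0 else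
            (2 : ℂ) ^ (k + 1) * ((y : ℕ → ℂ) k) ^ (2 * (k + 1)))‖ := by
          rw [hnorm2]; linarith
      _ ≤ ‖gFun y‖ := by
          rw [hgy]
          set R := ∑' k : ℕ, (if k = n then (0 : ℂ) else
            (2 : ℂ) ^ (k + 1) * ((y : ℕ → ℂ) k) ^ (2 * (k + 1))) with hR
          have h : ‖(2 : ℂ) ^ (n + 1)‖ ≤ ‖(2 : ℂ) ^ (n + 1) + R‖ + ‖R‖ := by
            calc ‖(2 : ℂ) ^ (n + 1)‖ = ‖((2 : ℂ) ^ (n + 1) + R) - R‖ := by ring_nf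
              _ ≤ _ := norm_sub_le _ _
          linarith
end

section
/- Define f : ℓ¹(ℕ, ℂ) → ℂ^ℕ by f(x) = (g(nx))_{n∈ℕ}, where g(x) = Σ_{k=1}^∞ 2^k (x_k)^{2k}. Then f is unbounded on every non-empty open subset of ℓ¹: for every non-empty open U ⊆ ℓ¹, the image f(U) is not a bounded subset of the product space ℂ^ℕ. -/
/-- `f : ℓ¹ → ℂ^ℕ`, `f(x) = (g(nx))_{n ∈ {1,2,...}}`. -/
noncomputable def fFun (x : lp (fun _ : ℕ => ℂ) 1) : ℕ → ℂ :=
  fun n => gFun (((n : ℂ) + 1) • x)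

set_option maxHeartbeats 1000000 in
theorem fFun_unbounded_on_open_sets (U : Set (lp (fun _ : ℕ => ℂ) 1))
    (hU : IsOpen U) (hne : U.Nonempty) :
    ¬ Bornology.IsVonNBounded ℂ (fFun '' U) := by
  intro hB
  obtain ⟨x₀, hx₀U⟩ := hne
  obtain ⟨ε, hε, hball⟩ := Metric.isOpen_iff.1 hU x₀ hx₀U
  have hsum : Summable fun k => ‖(x₀ : ℕ → ℂ) k‖ := by
    have h := (lp.memℓp x₀).summable (p := 1) (by norm_num)
    simpa using h
  -- choose `N` with small tail
  obtain ⟨N, hN⟩ : ∃ N : ℕ, (∑' k : ℕ, ‖(x₀ : ℕ → ℂ) (k + N)‖) < ε / 4 := by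
    have h := (tendsto_sum_nat_add fun k => ‖(x₀ : ℕ → ℂ) k‖).eventually
      (gt_mem_nhds (by positivity : (0:ℝ) < ε / 4))
    exact h.exists
  -- choose `n` with `2 ≤ (n+1) * (ε/4)`
  obtain ⟨n, hn⟩ := exists_nat_ge (8 / ε)
  have hn2 : (2 : ℝ) ≤ ((n : ℝ) + 1) * (ε / 4) := by
    have h8 : 8 / ε * (ε / 4) ≤ ((n : ℝ) + 1) * (ε / 4) :=
      mul_le_mul_of_nonneg_right (by linarith) (by positivity)
    calc (2 : ℝ) = 8 / ε * (ε / 4) := by field_simp; norm_num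
    _ ≤ _ := h8
  -- extract a bound on the `n`-th coordinate
  have hBn := hB.image (ContinuousLinearMap.proj (R := ℂ) (φ := fun _ : ℕ => ℂ) n)
  rw [NormedSpace.isVonNBounded_iff] at hBn
  obtain ⟨C, hC⟩ := isBounded_iff_forall_norm_le.1 hBn
  have hC' : ∀ y ∈ U, ‖fFun y n‖ ≤ C := fun y hy => hC _ ⟨_, ⟨y, hy, rfl⟩, rfl⟩
  set c : ℂ := (n : ℂ) + 1 with hc
  set S : ℂ := ∑ k ∈ Finset.range N, (2 : ℂ) ^ (k + 1) * (c * (x₀ : ℕ → ℂ) k) ^ (2 * (k + 1))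
    with hS
  obtain ⟨k₁, hk₁⟩ := pow_unbounded_of_one_lt (C + ‖S‖) (by norm_num : (1 : ℝ) < 2)
  set k₀ := max N k₁ with hk₀def
  have hk₀N : N ≤ k₀ := le_max_left _ _
  have hk₀ : C + ‖S‖ < 2 ^ k₀ :=
    lt_of_lt_of_le hk₁ (pow_le_pow_right₀ (by norm_num) (le_max_right _ _))
  -- the perturbation `d₁` killing the tail of `x₀`
  set d₁f : ℕ → ℂ := fun k => if k < N then 0 else -((x₀ : ℕ → ℂ) k) with hd₁f
  have hd₁le : ∀ k, ‖d₁f k‖ ≤ ‖(x₀ : ℕ → ℂ) k‖ := by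
    intro k; by_cases h : k < N <;> simp [hd₁f, h]
  have hd₁mem : Memℓp d₁f 1 := by
    apply memℓp_gen
    simp only [ENNReal.toReal_one, Real.rpow_one]
    exact Summable.of_nonneg_of_le (fun k => norm_nonneg _) hd₁le hsum
  set d₁ : lp (fun _ : ℕ => ℂ) 1 := ⟨d₁f, hd₁mem⟩ with hd₁
  have hd₁sum : Summable fun k => ‖d₁f k‖ :=
    Summable.of_nonneg_of_le (fun k => norm_nonneg _) hd₁le hsum
  have hd₁norm : ‖d₁‖ < ε / 4 := by
    rw [lp.norm_eq_tsum_rpow (by norm_num) d₁]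
    simp only [ENNReal.toReal_one, Real.rpow_one, one_div_one]
    have h1 : (∑' k, ‖(d₁ : ℕ → ℂ) k‖) = ∑' k, ‖d₁f k‖ := rfl
    have h2 : ∑ k ∈ Finset.range N, ‖d₁f k‖ + ∑' k, ‖d₁f (k + N)‖ = ∑' k, ‖d₁f k‖ :=
      Summable.sum_add_tsum_nat_add N hd₁sum
    have h0 : ∑ k ∈ Finset.range N, ‖d₁f k‖ = 0 :=
      Finset.sum_eq_zero fun k hk => by simp [hd₁f, Finset.mem_range.1 hk]
    have h3 : (fun k => ‖d₁f (k + N)‖) = fun k => ‖(x₀ : ℕ → ℂ) (k + N)‖ := by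
      funext k
      simp [hd₁f, Nat.not_lt.2 (Nat.le_add_left N k)]
    rw [h1, ← h2, h0, h3, zero_add]
    simpa using hN
  set tc : ℂ := ((ε / 4 : ℝ) : ℂ) with htc
  set y : lp (fun _ : ℕ => ℂ) 1 := x₀ + (d₁ + lp.single 1 k₀ tc) with hy
  have hsn : ‖lp.single (E := fun _ : ℕ => ℂ) 1 k₀ tc‖ = ε / 4 := by
    have := lp.norm_single (E := fun _ : ℕ => ℂ) (p := 1) (by norm_num) k₀ tc
    rw [this, htc, Complex.norm_real, Real.norm_eq_abs, abs_of_pos (by positivity)]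
  have hyU : y ∈ U := by
    apply hball
    rw [Metric.mem_ball, dist_eq_norm, hy, add_sub_cancel_left]
    have h1 := norm_add_le d₁ (lp.single (E := fun _ : ℕ => ℂ) 1 k₀ tc)
    rw [hsn] at h1
    linarith
  -- coordinates of y
  have hyk : ∀ k, (y : ℕ → ℂ) k =
      if k < N then (x₀ : ℕ → ℂ) k else if k = k₀ then tc else 0 := by
    intro k
    have hd₁coe : (d₁ : ℕ → ℂ) = d₁f := rfl
    have : (y : ℕ → ℂ) k = (x₀ : ℕ → ℂ) k
        + (d₁f k + (lp.single (E := fun _ : ℕ => ℂ) 1 k₀ tc : ℕ → ℂ) k) := by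
      rw [hy]
      simp only [lp.coeFn_add, Pi.add_apply, hd₁coe]
    rw [this]
    by_cases hk : k < N
    · have hkne : k ≠ k₀ := Nat.ne_of_lt (lt_of_lt_of_le hk hk₀N)
      simp [hd₁f, hk, lp.single_apply_ne (E := fun _ : ℕ => ℂ) 1 k₀ tc hkne, Pi.single_eq_of_ne hkne, if_pos hk]
    · by_cases hk2 : k = k₀
      · subst hk2
        simp [hd₁f, hk, lp.single_apply_self (E := fun _ : ℕ => ℂ) 1 k₀ tc, if_neg hk]
      · simp [hd₁f, hk, lp.single_apply_ne (E := fun _ : ℕ => ℂ) 1 k₀ tc hk2, Pi.single_eq_of_ne hk2, if_neg hk, if_neg hk2]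
  -- compute fFun y n
  set F : ℕ → ℂ := fun k => (2 : ℂ) ^ (k + 1) * (c * (y : ℕ → ℂ) k) ^ (2 * (k + 1)) with hF
  have hval : fFun y n = F k₀ + S := by
    have hgf : fFun y n = ∑' k : ℕ, F k := by
      show gFun (((n : ℂ) + 1) • y) = _
      unfold gFun
      apply tsum_congr
      intro k
      rw [hF, lp.coeFn_smul]
      simp [hc]
    rw [hgf]
    have hzero : ∀ k ∉ insert k₀ (Finset.range N), F k = 0 := by
      intro k hk
      simp only [Finset.mem_insert, Finset.mem_range, not_or, not_lt] at hk
      have : (y : ℕ → ℂ) k = 0 := by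
        rw [hyk k, if_neg (Nat.not_lt.2 hk.2), if_neg hk.1]
      rw [hF]
      simp [this, pow_eq_zero_iff]
    rw [tsum_eq_sum hzero, Finset.sum_insert (by simp [Nat.not_lt.2 hk₀N])]
    congr 1
    apply Finset.sum_congr rfl
    intro k hk
    have hx : (y : ℕ → ℂ) k = (x₀ : ℕ → ℂ) k := by
      rw [hyk k, if_pos (Finset.mem_range.1 hk)]
    simp [hF, hx]
  -- the spike term is large
  have hys : (y : ℕ → ℂ) k₀ = tc := by
    rw [hyk k₀, if_neg (Nat.not_lt.2 hk₀N), if_pos rfl]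
  have hnormc : (2 : ℝ) ≤ ‖c * tc‖ := by
    rw [norm_mul]
    have h1 : ‖c‖ = (n : ℝ) + 1 := by
      rw [hc]
      have : ((n : ℂ) + 1) = (((n : ℝ) + 1 : ℝ) : ℂ) := by push_cast; ring
      rw [this, Complex.norm_real, Real.norm_eq_abs, abs_of_pos (by positivity)]
    have h2 : ‖tc‖ = ε / 4 := by
      rw [htc, Complex.norm_real, Real.norm_eq_abs, abs_of_pos (by positivity)]
    rw [h1, h2]; exact hn2
  have hFk₀ : (2 : ℝ) ^ k₀ ≤ ‖F k₀‖ := by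
    rw [hF]
    simp only [hys, norm_mul, norm_pow]
    have h2 : ‖(2 : ℂ)‖ = 2 := by simp
    rw [h2]
    calc (2 : ℝ) ^ k₀ ≤ 2 ^ (k₀ + 1) * 2 ^ (2 * (k₀ + 1)) := by
          rw [← pow_add]
          exact pow_le_pow_right₀ (by norm_num) (by omega)
    _ ≤ 2 ^ (k₀ + 1) * ‖c * tc‖ ^ (2 * (k₀ + 1)) := by
          have hp := pow_le_pow_left₀ (by norm_num : (0:ℝ) ≤ 2) hnormc (2 * (k₀ + 1))
          exact mul_le_mul_of_nonneg_left hp (by positivity)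
    _ = 2 ^ (k₀ + 1) * (‖c‖ * ‖tc‖) ^ (2 * (k₀ + 1)) := by rw [norm_mul]
  -- contradiction
  have hlarge : C < ‖fFun y n‖ := by
    rw [hval]
    calc C < 2 ^ k₀ - ‖S‖ := by linarith
    _ ≤ ‖F k₀‖ - ‖S‖ := by linarith
    _ ≤ ‖F k₀ + S‖ := by
          have := norm_add_le (F k₀ + S) (-S)
          simp only [add_neg_cancel_right, norm_neg] at this
          linarith
  exact absurd (hC' y hyU) (not_le.2 hlarge)
end

section
/- Let U ⊆ ℂ be open non-empty and E₀ = span_ℂ{(z^n)_{n∈ℕ} : z ∈ e^U} ⊆ ℂ^ℕ with the topology induced by the product ℂ^ℕ. Then the map f₀ : U → E₀, f₀(z) = (e^{nz})_{n∈ℕ}, is continuous but not complex differentiable as a map into E₀: for z ∈ U, the candidate derivative (n e^{nz})_{n∈ℕ} does not belong to E₀. -/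
open Filter Polynomial Topology

noncomputable def Lfun (P : Polynomial ℂ) : (ℕ → ℂ) →ₗ[ℂ] ℂ :=
  ∑ k ∈ P.support, P.coeff k • LinearMap.proj k

lemma Lfun_apply (P : Polynomial ℂ) (s : ℕ → ℂ) :
    Lfun P s = P.sum fun k a => a * s k := by
  simp [Lfun, Polynomial.sum, LinearMap.sum_apply]

lemma Lfun_geom (P : Polynomial ℂ) (v : ℂ) :
    Lfun P (fun n => v ^ (n + 1)) = P.eval v * v := by
  rw [Lfun_apply, eval_eq_sum, Polynomial.sum, Polynomial.sum, Finset.sum_mul]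
  exact Finset.sum_congr rfl fun k _ => by ring

lemma Lfun_deriv (P : Polynomial ℂ) (w : ℂ) :
    Lfun P (fun n => ((n : ℂ) + 1) * w ^ (n + 1)) =
      w * Polynomial.eval w (Polynomial.derivative (X * P)) := by
  rw [Lfun_apply]
  induction P using Polynomial.induction_on' with
  | add p q hp hq =>
      rw [Polynomial.sum_add_index p q _ (fun k => by ring) (fun k b c => by ring), hp, hq,
        mul_add, derivative_add, eval_add, mul_add]
  | monomial n a =>
      rw [Polynomial.sum_monomial_index]
      · have : (X : Polynomial ℂ) * monomial n a = monomial (n+1) a := by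
          rw [X_mul_monomial]
        rw [this, derivative_monomial]
        push_cast
        simp [pow_succ]
        ring
      · simp

lemma deriv_not_mem_span (w : ℂ) (hw : w ≠ 0) (T : Set (ℕ → ℂ))
    (hT : ∀ s ∈ T, ∃ v : ℂ, v ≠ 0 ∧ s = fun n => v ^ (n + 1)) :
    (fun n : ℕ => ((n : ℂ) + 1) * w ^ (n + 1)) ∉ Submodule.span ℂ T := by
  intro hmem
  obtain ⟨c, hsupp, hsum⟩ := Submodule.mem_span_set.1 hmem
  set V : Finset ℂ := c.support.image (fun s => s 0) with hV
  set Q : Polynomial ℂ := ∏ v ∈ V.erase w, (X - C v) with hQ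
  set P : Polynomial ℂ := (X - C w) * Q with hP
  have hQw : Q.eval w = ∏ v ∈ V.erase w, (w - v) := by simp [hQ, eval_prod]
  have hQw0 : Q.eval w ≠ 0 := by
    rw [hQw]
    exact Finset.prod_ne_zero_iff.2 fun v hv =>
      sub_ne_zero.2 (Ne.symm (Finset.mem_erase.1 hv).1)
  -- each generator is killed by `Lfun P`
  have hzero : Lfun P (c.sum fun s r => r • s) = 0 := by
    rw [map_finsuppSum]
    apply Finset.sum_eq_zero
    intro s hs
    obtain ⟨v, hv0, hsv⟩ := hT s (hsupp hs)
    have hs0 : s 0 = v := by rw [hsv]; simp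
    have hvV : v ∈ V := hs0 ▸ Finset.mem_image_of_mem _ hs
    have hPv : P.eval v = 0 := by
      by_cases hvw : v = w
      · simp [hP, hvw]
      · have : v ∈ V.erase w := Finset.mem_erase.2 ⟨hvw, hvV⟩
        simp only [hP, eval_mul, hQ, eval_prod]
        exact mul_eq_zero_of_right _ (Finset.prod_eq_zero this (by simp))
    show Lfun P (c s • s) = 0
    rw [map_smul, hsv, Lfun_geom, hPv, zero_mul, smul_zero]
  rw [hsum, Lfun_deriv] at hzero
  have he : Polynomial.eval w (Polynomial.derivative (X * P)) = w * Q.eval w := by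
    simp [hP, derivative_mul, eval_mul, eval_add, mul_add, add_mul]
  rw [he] at hzero
  exact hQw0 (by simpa [hw] using hzero)

lemma exp_key (z : ℂ) (n : ℕ) :
    Complex.exp (((n : ℂ) + 1) * z) = Complex.exp z ^ (n + 1) := by
  rw [show ((n : ℂ) + 1) = ((n + 1 : ℕ) : ℂ) by push_cast; ring, ← Complex.exp_nat_mul]

/-- Let `U ⊆ ℂ` be open and non-empty, and let `E₀ ⊆ ℂ^ℕ` be the span of the
geometric sequences `(e^{nz})_{n≥1}` for `z ∈ U` (i.e. of `(wⁿ)ₙ` for `w ∈ e^U`),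
with the topology induced by the product `ℂ^ℕ`. Then `f₀(z) = (e^{nz})ₙ` takes
values in `E₀` and is continuous on `U`, but at no point `z ∈ U` is it complex
differentiable as a map into `E₀`: the candidate derivative `(n e^{nz})ₙ` is not
in `E₀`, and the difference quotients have no limit in `E₀` (equivalently, since
`E₀` carries the induced topology, no limit `L ∈ E₀` in the ambient product). -/
theorem f0_continuous_not_differentiable (U : Set ℂ) (hU : IsOpen U)
    (hne : U.Nonempty) (E₀ : Submodule ℂ (ℕ → ℂ))
    (hE₀ : E₀ = Submodule.span ℂ
      {s : ℕ → ℂ | ∃ z ∈ U, s = fun n : ℕ => Complex.exp (((n : ℂ) + 1) * z)}) :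
    (∀ z ∈ U, (fun n : ℕ => Complex.exp (((n : ℂ) + 1) * z)) ∈ E₀) ∧
    ContinuousOn (fun z : ℂ => (fun n : ℕ => Complex.exp (((n : ℂ) + 1) * z))) U ∧
    ∀ z ∈ U,
      (fun n : ℕ => ((n : ℂ) + 1) * Complex.exp (((n : ℂ) + 1) * z)) ∉ E₀ ∧
      ¬ ∃ L ∈ E₀, Tendsto
        (fun w : ℂ => (w - z)⁻¹ •
          ((fun n : ℕ => Complex.exp (((n : ℂ) + 1) * w))
            - fun n : ℕ => Complex.exp (((n : ℂ) + 1) * z)))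
        (nhdsWithin z (U \ {z})) (nhds L) := by
  refine ⟨fun z hz => hE₀ ▸ Submodule.subset_span ⟨z, hz, rfl⟩, ?_, fun z hz => ?_⟩
  · exact (continuous_pi fun n =>
      Complex.continuous_exp.comp (continuous_const.mul continuous_id)).continuousOn
  have hnotmem : (fun n : ℕ => ((n : ℂ) + 1) * Complex.exp (((n : ℂ) + 1) * z)) ∉ E₀ := by
    rw [hE₀]
    have := deriv_not_mem_span (Complex.exp z) (Complex.exp_ne_zero z)
      {s : ℕ → ℂ | ∃ z ∈ U, s = fun n : ℕ => Complex.exp (((n : ℂ) + 1) * z)}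
      (fun s hs => by
        obtain ⟨z', hz', rfl⟩ := hs
        exact ⟨Complex.exp z', Complex.exp_ne_zero z', funext fun n => exp_key z' n⟩)
    simpa only [exp_key] using this
  refine ⟨hnotmem, ?_⟩
  rintro ⟨L, hL, hT⟩
  have hfil : 𝓝[U \ {z}] z = 𝓝[≠] z := by
    rw [Set.diff_eq,
      nhdsWithin_inter_of_mem (mem_nhdsWithin_of_mem_nhds (hU.mem_nhds hz))]
  rw [hfil] at hT
  have hLn : ∀ n : ℕ, L n = ((n : ℂ) + 1) * Complex.exp (((n : ℂ) + 1) * z) := by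
    intro n
    have hd : HasDerivAt (fun w => Complex.exp (((n : ℂ) + 1) * w))
        (((n : ℂ) + 1) * Complex.exp (((n : ℂ) + 1) * z)) z := by
      have := (Complex.hasDerivAt_exp (((n : ℂ) + 1) * z)).comp z
          ((hasDerivAt_id z).const_mul ((n : ℂ) + 1))
      simpa [Function.comp_def, mul_comm, mul_one] using this
    have h1 := hasDerivAt_iff_tendsto_slope.1 hd
    have h2 : Tendsto (fun w : ℂ =>
        (w - z)⁻¹ * (Complex.exp (((n : ℂ) + 1) * w) - Complex.exp (((n : ℂ) + 1) * z)))
        (𝓝[≠] z) (𝓝 (L n)) := by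
      have := ((continuous_apply n).tendsto L).comp hT
      simpa [Function.comp_def, smul_eq_mul] using this
    refine tendsto_nhds_unique h2 ?_
    simpa [slope_fun_def_field, div_eq_inv_mul] using h1
  exact hnotmem (by rw [show (fun n : ℕ => ((n : ℂ) + 1) * Complex.exp (((n : ℂ) + 1) * z))
    = L from funext fun n => (hLn n).symm]; exact hL)
end

section
/- Let k ∈ ℕ, U ⊆ ℂ open non-empty, and E_k = span_ℂ{ (n^j z^n)_{n∈ℕ} : z ∈ e^U, 0 ≤ j ≤ k } ⊆ ℂ^ℕ with the product-induced topology. Then the map f_k : U → E_k, f_k(z) = (e^{nz})_{n∈ℕ}, is k times continuously complex differentiable with f_k^{(j)}(z) = (n^j e^{nz})_{n∈ℕ} for j ≤ k, but f_k is not (k+1) times complex differentiable, since (n^{k+1} e^{nz})_{n∈ℕ} ∉ E_k. -/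
open Filter

/-- The `j`-th derivative candidate: `F j z = (n^j e^{nz})_{n≥1}`. -/
noncomputable def Fder (j : ℕ) (z : ℂ) : ℕ → ℂ :=
  fun n => ((n : ℂ) + 1) ^ j * Complex.exp (((n : ℂ) + 1) * z)

noncomputable def hseq (j : ℕ) (w : ℂ) : ℕ → ℂ := fun n => ((n : ℂ) + 1) ^ j * w ^ (n + 1)

lemma Fder_eq_hseq (j : ℕ) (z : ℂ) : Fder j z = hseq j (Complex.exp z) := by
  funext n
  have : (((n + 1 : ℕ) : ℂ)) * z = ((n : ℂ) + 1) * z := by push_cast; ring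
  simp only [Fder, hseq, ← Complex.exp_nat_mul, this]

def shift : Module.End ℂ (ℕ → ℂ) where
  toFun a := fun n => a (n + 1)
  map_add' _ _ := rfl
  map_smul' _ _ := rfl

lemma key_sum (x : ℂ) (j : ℕ) :
    (x + 1) ^ j = (∑ i ∈ Finset.range j, (j.choose i : ℂ) * x ^ i) + x ^ j := by
  rw [add_pow, Finset.sum_range_succ]
  simp [mul_comm]

lemma shift_step (w : ℂ) (j : ℕ) :
    (shift - w • (1 : Module.End ℂ (ℕ → ℂ))) (hseq j w)
      = w • ∑ i ∈ Finset.range j, (j.choose i : ℂ) • hseq i w := by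
  funext n
  simp only [LinearMap.sub_apply, LinearMap.smul_apply, Module.End.one_apply, Pi.smul_apply,
    Finset.sum_apply, smul_eq_mul]
  show hseq j w (n + 1) - w * hseq j w n = w * ∑ i ∈ Finset.range j, (j.choose i : ℂ) * hseq i w n
  simp only [hseq]
  push_cast
  have hx := key_sum ((n : ℂ) + 1) j
  rw [hx, add_mul, Finset.sum_mul, Finset.mul_sum]
  have hterm : ∀ i ∈ Finset.range j,
      (j.choose i : ℂ) * ((n : ℂ) + 1) ^ i * w ^ (n + 1 + 1)
        = w * ((j.choose i : ℂ) * (((n : ℂ) + 1) ^ i * w ^ (n + 1))) := by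
    intro i _; ring
  rw [Finset.sum_congr rfl hterm]
  ring

lemma shift_kill (w : ℂ) : ∀ j m : ℕ, j < m →
    ((shift - w • (1 : Module.End ℂ (ℕ → ℂ))) ^ m) (hseq j w) = 0 := by
  intro j
  induction j using Nat.strong_induction_on with
  | _ j ih =>
    intro m hm
    obtain ⟨m', rfl⟩ : ∃ m', m = m' + 1 := ⟨m - 1, by omega⟩
    rw [pow_succ, Module.End.mul_apply, shift_step, map_smul, map_sum]
    have hz : ∀ i ∈ Finset.range j,
        ((shift - w • (1 : Module.End ℂ (ℕ → ℂ))) ^ m') ((j.choose i : ℂ) • hseq i w) = 0 := by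
      intro i hi
      have hij := Finset.mem_range.mp hi
      rw [map_smul, ih i hij m' (by omega), smul_zero]
    rw [Finset.sum_eq_zero hz, smul_zero]

lemma shift_lead (w : ℂ) : ∀ j : ℕ,
    ((shift - w • (1 : Module.End ℂ (ℕ → ℂ))) ^ j) (hseq j w)
      = ((j.factorial : ℂ) * w ^ j) • hseq 0 w := by
  intro j
  induction j with
  | zero => simp
  | succ j ih =>
    rw [pow_succ, Module.End.mul_apply, shift_step, map_smul, map_sum, Finset.sum_range_succ]
    have h1 : ∀ i ∈ Finset.range j,
        ((shift - w • (1 : Module.End ℂ (ℕ → ℂ))) ^ j) (((j + 1).choose i : ℂ) • hseq i w)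
          = 0 := by
      intro i hi
      rw [map_smul, shift_kill w i j (Finset.mem_range.mp hi), smul_zero]
    rw [Finset.sum_eq_zero h1, zero_add, map_smul, ih, Nat.choose_succ_self_right]
    rw [smul_smul, smul_smul]
    congr 1
    push_cast [Nat.factorial_succ]
    ring

lemma hseq_mem_gen (w : ℂ) (j : ℕ) :
    hseq j w ∈ shift.genEigenspace w ((j + 1 : ℕ) : ℕ∞) := by
  rw [Module.End.mem_genEigenspace_nat, LinearMap.mem_ker]
  exact shift_kill w j (j + 1) (Nat.lt_succ_self j)

lemma key_not_mem (k : ℕ) (U : Set ℂ) (z : ℂ) :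
    Fder (k + 1) z ∉ Submodule.span ℂ
      {s : ℕ → ℂ | ∃ z ∈ U, ∃ j ≤ k, s = Fder j z} := by
  intro hmem
  set w0 := Complex.exp z with hw0
  set P : Submodule ℂ (ℕ → ℂ) := shift.genEigenspace w0 ((k + 1 : ℕ) : ℕ∞) with hP
  set Q : Submodule ℂ (ℕ → ℂ) :=
    ⨆ w, ⨆ (_ : w ≠ w0), shift.genEigenspace w ⊤ with hQ
  have hspan : Submodule.span ℂ {s : ℕ → ℂ | ∃ z ∈ U, ∃ j ≤ k, s = Fder j z} ≤ P ⊔ Q := by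
    rw [Submodule.span_le]
    rintro s ⟨z', hz', j, hj, rfl⟩
    rw [Fder_eq_hseq]
    by_cases h : Complex.exp z' = w0
    · apply Submodule.mem_sup_left
      rw [h]
      exact (shift.genEigenspace w0).monotone (by exact_mod_cast Nat.succ_le_succ hj)
        (hseq_mem_gen w0 j)
    · apply Submodule.mem_sup_right
      have hmemw : hseq j (Complex.exp z') ∈ shift.genEigenspace (Complex.exp z') ⊤ :=
        (shift.genEigenspace (Complex.exp z')).monotone le_top (hseq_mem_gen _ j)
      exact Submodule.mem_iSup_of_mem _ (Submodule.mem_iSup_of_mem h hmemw)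
  have hPQ : hseq (k + 1) w0 ∈ P ⊔ Q := by
    rw [Fder_eq_hseq] at hmem
    exact hspan hmem
  obtain ⟨p, hp, q, hq, hpq⟩ := Submodule.mem_sup.mp hPQ
  have hdisj : Disjoint (shift.genEigenspace w0 ⊤) Q :=
    Module.End.independent_genEigenspace shift ⊤ w0
  have hqtop : q ∈ shift.genEigenspace w0 ⊤ := by
    have h1 : hseq (k + 1) w0 ∈ shift.genEigenspace w0 ⊤ :=
      (shift.genEigenspace w0).monotone le_top (hseq_mem_gen w0 (k + 1))
    have h2 : p ∈ shift.genEigenspace w0 ⊤ :=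
      (shift.genEigenspace w0).monotone le_top hp
    have : q = hseq (k + 1) w0 - p := by rw [← hpq]; ring
    rw [this]
    exact Submodule.sub_mem _ h1 h2
  have hq0 : q = 0 := Submodule.disjoint_def.mp hdisj q hqtop hq
  have hmemP : hseq (k + 1) w0 ∈ P := by
    rw [← hpq, hq0, add_zero]; exact hp
  rw [hP, Module.End.mem_genEigenspace_nat, LinearMap.mem_ker, shift_lead] at hmemP
  have hw0ne : w0 ≠ 0 := Complex.exp_ne_zero z
  have hsne : hseq 0 w0 ≠ 0 := by
    intro h
    have := congrFun h 0
    simp [hseq] at this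
    exact hw0ne this
  exact hsne (by
    have hc : ((k + 1).factorial : ℂ) * w0 ^ (k + 1) ≠ 0 :=
      mul_ne_zero (Nat.cast_ne_zero.mpr (Nat.factorial_ne_zero _)) (pow_ne_zero _ hw0ne)
    exact (smul_eq_zero.mp hmemP).resolve_left hc)

lemma Fder_hasDerivAt (j : ℕ) (z : ℂ) (n : ℕ) :
    HasDerivAt (fun w => Fder j w n) (Fder (j + 1) z n) z := by
  have h1 : HasDerivAt (fun w : ℂ => ((n : ℂ) + 1) * w) ((n : ℂ) + 1) z := by
    simpa using (hasDerivAt_id z).const_mul ((n : ℂ) + 1)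
  have h2 : HasDerivAt (fun w : ℂ => Complex.exp (((n : ℂ) + 1) * w))
      (Complex.exp (((n : ℂ) + 1) * z) * ((n : ℂ) + 1)) z := h1.cexp
  have h3 := h2.const_mul (((n : ℂ) + 1) ^ j)
  have he : Fder (j + 1) z n = ((n : ℂ) + 1) ^ j * (Complex.exp (((n : ℂ) + 1) * z) * ((n : ℂ) + 1)) := by
    simp only [Fder, pow_succ]
    ring
  rw [he]; exact h3

lemma slope_tendsto (j : ℕ) (z : ℂ) (U : Set ℂ) :
    Tendsto (fun w : ℂ => (w - z)⁻¹ • (Fder j w - Fder j z))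
      (nhdsWithin z (U \ {z})) (nhds (Fder (j + 1) z)) := by
  rw [tendsto_pi_nhds]
  intro n
  have h := hasDerivAt_iff_tendsto_slope.mp (Fder_hasDerivAt j z n)
  have hmono : nhdsWithin z (U \ {z}) ≤ nhdsWithin z {z}ᶜ :=
    nhdsWithin_mono z fun w hw => hw.2
  refine (h.mono_left hmono).congr fun w => ?_
  simp [slope_def_field, Pi.smul_apply, Pi.sub_apply, div_eq_inv_mul, smul_eq_mul]


/-- Let `k ≥ 1`, `U ⊆ ℂ` open non-empty, and let `E_k ⊆ ℂ^ℕ` be the span of the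
sequences `(n^j wⁿ)ₙ` for `w ∈ e^U`, `0 ≤ j ≤ k`, with the topology induced by
the product `ℂ^ℕ`. Then `f_k(z) = (e^{nz})ₙ` is `k` times continuously complex
differentiable into `E_k` with `f_k^{(j)}(z) = (n^j e^{nz})ₙ` for `j ≤ k`: all
these derivatives lie in `E_k`, are continuous on `U`, and are obtained as limits
of difference quotients. But `f_k` is not `(k+1)` times complex differentiable:
`(n^{k+1} e^{nz})ₙ ∉ E_k`, and (since `E_k` carries the induced topology) the
difference quotients of `f_k^{(k)}` have no limit in `E_k`. -/
theorem fk_Ck_not_Ck1 (k : ℕ) (hk : 1 ≤ k) (U : Set ℂ) (hU : IsOpen U)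
    (hne : U.Nonempty) (Ek : Submodule ℂ (ℕ → ℂ))
    (hEk : Ek = Submodule.span ℂ
      {s : ℕ → ℂ | ∃ z ∈ U, ∃ j ≤ k, s = Fder j z}) :
    (∀ j ≤ k, ∀ z ∈ U, Fder j z ∈ Ek) ∧
    (∀ j ≤ k, ContinuousOn (Fder j) U) ∧
    (∀ j < k, ∀ z ∈ U,
      Tendsto (fun w : ℂ => (w - z)⁻¹ • (Fder j w - Fder j z))
        (nhdsWithin z (U \ {z})) (nhds (Fder (j + 1) z))) ∧
    ∀ z ∈ U,
      Fder (k + 1) z ∉ Ek ∧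
      ¬ ∃ L ∈ Ek, Tendsto (fun w : ℂ => (w - z)⁻¹ • (Fder k w - Fder k z))
        (nhdsWithin z (U \ {z})) (nhds L) := by
  refine ⟨?_, ?_, ?_, ?_⟩
  · intro j hj z hz
    rw [hEk]
    exact Submodule.subset_span ⟨z, hz, j, hj, rfl⟩
  · intro j _
    apply Continuous.continuousOn
    apply continuous_pi
    intro n
    exact continuous_const.mul (Complex.continuous_exp.comp (continuous_const.mul continuous_id))
  · intro j _ z _
    exact slope_tendsto j z U
  · intro z hz
    have hnotmem : Fder (k + 1) z ∉ Ek := by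
      rw [hEk]; exact key_not_mem k U z
    refine ⟨hnotmem, ?_⟩
    rintro ⟨L, hL, hT⟩
    have hneb : (nhdsWithin z (U \ {z})).NeBot := by
      have heq : nhdsWithin z (U \ {z}) = nhdsWithin z {z}ᶜ := by
        rw [Set.diff_eq, Set.inter_comm]
        exact nhdsWithin_inter_of_mem' (mem_nhdsWithin_of_mem_nhds (hU.mem_nhds hz))
      rw [heq]
      infer_instance
    have hT2 := slope_tendsto k z U
    have : L = Fder (k + 1) z := tendsto_nhds_unique hT hT2
    rw [this] at hL
    exact hnotmem hL
end
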